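/- Let X be a Banach space and let Y be a weak*-closed linear subspace of the dual X*. Suppose there is a directed set Λ and a net (Y_λ)_{λ∈Λ} of weak*-closed subspaces of Y with Y_{λ₁} ⊆ Y_{λ₂} whenever λ₁ ≤ λ₂, such that the union ⋃_{λ∈Λ} Y_λ is norm-dense in Y. Suppose further that each Y_λ is the range of a weak*-continuous bounded linear projection P_λ : X* → X*, that sup_λ ‖P_λ‖ ≤ M for some M < ∞, and that lim_λ sup_{μ ≥ λ} ‖P_λ ∘ P_μ − P_λ‖ = 0. Then there exists a weak*-continuous bounded linear projection P from X* onto Y with ‖P‖ ≤ M. -/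

import Mathlib

open NormedSpace Filter Topology

/-- A bounded linear operator on the dual of `X` is weak*-continuous if it is continuous
with respect to the weak* topology on `X*` (in both source and target). -/
def IsWeakStarContinuous {X : Type*} [NormedAddCommGroup X] [NormedSpace ℝ X]
    (T : StrongDual ℝ X →L[ℝ] StrongDual ℝ X) : Prop :=
  Continuous fun φ : WeakDual ℝ X => StrongDual.toWeakDual (T (WeakDual.toStrongDual φ))

section Helpers

variable {X : Type*} [NormedAddCommGroup X] [NormedSpace ℝ X]

lemma weakDual_functional_rep (f : WeakDual ℝ X →L[ℝ] ℝ) :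
    ∃ x : X, ∀ φ : StrongDual ℝ X, f φ = φ x := by
  set B := topDualPairing ℝ X with hB
  have hmem : f ⁻¹' Metric.ball (0 : ℝ) 1 ∈ 𝓝 (0 : WeakDual ℝ X) := by
    have := f.continuous.tendsto (0 : WeakDual ℝ X)
    rw [map_zero] at this
    exact this (Metric.ball_mem_nhds 0 one_pos)
  obtain ⟨U, hU, hUsub⟩ := (LinearMap.hasBasis_weakBilin B).mem_iff.mp hmem
  obtain ⟨s, r, hr, rfl⟩ := (SeminormFamily.basisSets_iff _).mp hU
  -- claim: φ vanishing on s implies f φ = 0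
  have key : ∀ φ : StrongDual ℝ X, (∀ x ∈ s, φ x = 0) → f φ = 0 := by
    intro φ hφ
    have hball : ∀ t : ℝ, (t • φ : StrongDual ℝ X) ∈ Seminorm.ball (s.sup (B.toSeminormFamily)) 0 r := by
      intro t
      rw [Seminorm.mem_ball_zero]
      refine Seminorm.finset_sup_apply_lt hr ?_
      intro i hi
      have h0 : (B φ) i = 0 := hφ i hi
      simpa [LinearMap.toSeminormFamily, h0] using hr
    have habs : ∀ t : ℝ, 0 < t → |f φ| < 1 / t := by
      intro t ht
      have h1 : |f ((t • φ : StrongDual ℝ X) : WeakDual ℝ X)| < 1 := by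
        have := hUsub (hball t)
        have h' : dist (f ((t • φ : StrongDual ℝ X) : WeakDual ℝ X)) 0 < 1 := this
        rwa [Real.dist_eq, sub_zero] at h'
      have h2 : f ((t • φ : StrongDual ℝ X) : WeakDual ℝ X) = t * f φ := by
        exact f.map_smul t (φ : WeakDual ℝ X)
      rw [h2, abs_mul, abs_of_pos ht] at h1
      calc |f φ| = (t * |f φ|) / t := by field_simp
      _ < 1 / t := by exact div_lt_div_of_pos_right h1 ht
    by_contra hne
    have hpos : 0 < |f φ| := abs_pos.mpr hne
    have := habs (2 / |f φ|) (by positivity)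
    rw [one_div, inv_div] at this
    linarith
  classical
  let K : (StrongDual ℝ X) →ₗ[ℝ] ℝ :=
    { toFun := fun φ => f φ
      map_add' := fun a b => f.map_add a b
      map_smul' := fun t a => f.map_smul t a }
  let L : {x // x ∈ s} → (StrongDual ℝ X) →ₗ[ℝ] ℝ := fun i => B.flip i.val
  have hker : ⨅ i, LinearMap.ker (L i) ≤ LinearMap.ker K := by
    intro φ hφ
    rw [LinearMap.mem_ker]
    refine key φ (fun x hx => ?_)
    have := (Submodule.mem_iInf _).mp hφ ⟨x, hx⟩
    simp [L, LinearMap.mem_ker] at this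
    exact this
  have hspan := mem_span_of_iInf_ker_le_ker hker
  obtain ⟨c, hc⟩ := (Submodule.mem_span_range_iff_exists_fun ℝ).mp hspan
  refine ⟨∑ i, c i • i.val, fun φ => ?_⟩
  have h1 := LinearMap.congr_fun hc φ
  have h2 : (∑ i, c i • L i) φ = ∑ i, c i • φ i.val := by
    simp only [LinearMap.sum_apply, LinearMap.smul_apply, LinearMap.flip_apply, smul_eq_mul, L]
    rfl
  have h3 : φ (∑ i, c i • i.val) = ∑ i, c i • φ i.val := by
    rw [map_sum]
    simp
  rw [h3, ← h2, h1]
  rfl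

lemma mem_of_vanishing_preann (Y : Submodule ℝ (StrongDual ℝ X))
    (hYc : IsClosed {φ : WeakDual ℝ X | WeakDual.toStrongDual φ ∈ Y})
    (φ : StrongDual ℝ X) (h : ∀ x : X, (∀ ψ ∈ Y, ψ x = 0) → φ x = 0) : φ ∈ Y := by
  haveI : LocallyConvexSpace ℝ (WeakDual ℝ X) :=
    WeakBilin.locallyConvexSpace (B := topDualPairing ℝ X)
  by_contra hφ
  set t : Set (WeakDual ℝ X) := {ψ : WeakDual ℝ X | WeakDual.toStrongDual ψ ∈ Y} with ht
  have hconv : Convex ℝ t := by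
    intro a ha b hb p q hp hq hpq
    have : WeakDual.toStrongDual (p • a + q • b) =
        p • WeakDual.toStrongDual a + q • WeakDual.toStrongDual b := rfl
    simp only [ht, Set.mem_setOf_eq, this]
    exact Y.add_mem (Y.smul_mem p ha) (Y.smul_mem q hb)
  have hdisj : (WeakDual.toStrongDual.symm φ : WeakDual ℝ X) ∉ t := hφ
  obtain ⟨f, u, hfu, hY⟩ := geometric_hahn_banach_point_closed hconv hYc hdisj
  have hu0 : u < 0 := by
    have := hY 0 (by simp [ht])
    simpa using this
  have hf0 : ∀ ψ ∈ Y, f (WeakDual.toStrongDual.symm ψ) = 0 := by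
    intro ψ hψ
    by_contra hne
    set c : ℝ := f (WeakDual.toStrongDual.symm ψ) with hc
    have hmem : ∀ s : ℝ, (WeakDual.toStrongDual.symm (s • ψ) : WeakDual ℝ X) ∈ t := by
      intro s
      simp only [ht, Set.mem_setOf_eq]
      simpa using Y.smul_mem s hψ
    have hlin : ∀ s : ℝ, f (WeakDual.toStrongDual.symm (s • ψ)) = s * c := by
      intro s
      have : (WeakDual.toStrongDual.symm (s • ψ) : WeakDual ℝ X)
          = s • (WeakDual.toStrongDual.symm ψ : WeakDual ℝ X) := by
        simp [map_smul]
      rw [this, map_smul, smul_eq_mul, hc]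
    have h1 := hY _ (hmem ((u - 1) / c))
    rw [hlin ((u - 1) / c)] at h1
    rw [div_mul_cancel₀ _ (by exact hne : c ≠ 0)] at h1
    linarith
  obtain ⟨x₀, hx₀⟩ := weakDual_functional_rep f
  have hann : ∀ ψ ∈ Y, ψ x₀ = 0 := by
    intro ψ hψ
    have := hf0 ψ hψ
    rw [hx₀ (WeakDual.toStrongDual.symm ψ)] at this
    exact this
  have hφ0 : φ x₀ = 0 := h x₀ hann
  have : f (WeakDual.toStrongDual.symm φ) = 0 := by
    rw [hx₀ (WeakDual.toStrongDual.symm φ)]; exact hφ0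
  rw [this] at hfu
  linarith

lemma exists_predual (T : StrongDual ℝ X →L[ℝ] StrongDual ℝ X) (hT : IsWeakStarContinuous T) :
    ∃ S : X →L[ℝ] X, ∀ (φ : StrongDual ℝ X) (x : X), T φ x = φ (S x) := by
  have hrep : ∀ x : X, ∃ z : X, ∀ φ : StrongDual ℝ X, T φ x = φ z := by
    intro x
    have hcont : Continuous fun φ : WeakDual ℝ X => T (WeakDual.toStrongDual φ) x :=
      (WeakDual.eval_continuous x).comp hT
    let g : WeakDual ℝ X →L[ℝ] ℝ :=
      { toFun := fun φ => T (WeakDual.toStrongDual φ) x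
        map_add' := by intro a b; simp
        map_smul' := by intro c a; simp
        cont := hcont }
    obtain ⟨z, hz⟩ := weakDual_functional_rep g
    exact ⟨z, fun φ => hz φ⟩
  choose S₀ hS₀ using hrep
  have hadd : ∀ x y : X, S₀ (x + y) = S₀ x + S₀ y := by
    intro x y
    have : ∀ φ : StrongDual ℝ X, φ (S₀ (x + y) - (S₀ x + S₀ y)) = 0 := by
      intro φ
      have h1 := hS₀ (x + y) φ
      have h2 := hS₀ x φ
      have h3 := hS₀ y φ
      have h4 : T φ (x + y) = T φ x + T φ y := map_add _ _ _
      simp only [map_sub, map_add]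
      rw [← h1, ← h2, ← h3]
      linarith
    have := NormedSpace.eq_zero_of_forall_dual_eq_zero ℝ this
    rwa [sub_eq_zero] at this
  have hsmul : ∀ (c : ℝ) (x : X), S₀ (c • x) = c • S₀ x := by
    intro c x
    have : ∀ φ : StrongDual ℝ X, φ (S₀ (c • x) - c • S₀ x) = 0 := by
      intro φ
      have h1 := hS₀ (c • x) φ
      have h2 := hS₀ x φ
      have h4 : T φ (c • x) = c • T φ x := map_smul _ _ _
      simp only [map_sub, map_smul]
      rw [← h1, ← h2, h4]
      simp
    have := NormedSpace.eq_zero_of_forall_dual_eq_zero ℝ this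
    rwa [sub_eq_zero] at this
  have hbound : ∀ x : X, ‖S₀ x‖ ≤ ‖T‖ * ‖x‖ := by
    intro x
    refine NormedSpace.norm_le_dual_bound ℝ (S₀ x) (by positivity) (fun φ => ?_)
    rw [← hS₀ x φ]
    calc ‖T φ x‖ ≤ ‖T φ‖ * ‖x‖ := (T φ).le_opNorm x
    _ ≤ ‖T‖ * ‖φ‖ * ‖x‖ := by gcongr; exact T.le_opNorm φ
    _ = ‖T‖ * ‖x‖ * ‖φ‖ := by ring
  refine ⟨LinearMap.mkContinuous ⟨⟨S₀, hadd⟩, hsmul⟩ ‖T‖ hbound, fun φ x => hS₀ x φ⟩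

end Helpers

set_option maxHeartbeats 1000000 in
theorem stmt_0 {X : Type*} [NormedAddCommGroup X] [NormedSpace ℝ X] [CompleteSpace X]
    {Λ : Type*} [Preorder Λ] [IsDirected Λ (· ≤ ·)] [Nonempty Λ]
    (Y : Submodule ℝ (StrongDual ℝ X))
    (hYc : IsClosed {φ : WeakDual ℝ X | WeakDual.toStrongDual φ ∈ Y})
    (Yl : Λ → Submodule ℝ (StrongDual ℝ X))
    (hYlY : ∀ lam, Yl lam ≤ Y)
    (hYlc : ∀ lam, IsClosed {φ : WeakDual ℝ X | WeakDual.toStrongDual φ ∈ Yl lam})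
    (hmono : ∀ lam₁ lam₂, lam₁ ≤ lam₂ → Yl lam₁ ≤ Yl lam₂)
    (hdense : (Y : Set (StrongDual ℝ X)) ⊆ closure (⋃ lam, (Yl lam : Set (StrongDual ℝ X))))
    (P : Λ → StrongDual ℝ X →L[ℝ] StrongDual ℝ X)
    (hproj : ∀ lam, (P lam) ∘L (P lam) = P lam)
    (hrange : ∀ lam, Set.range (P lam) = (Yl lam : Set (StrongDual ℝ X)))
    (hwcont : ∀ lam, IsWeakStarContinuous (P lam))
    (M : ℝ) (hM : ∀ lam, ‖P lam‖ ≤ M)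
    (hlim : ∀ ε > (0 : ℝ), ∃ lam₀ : Λ, ∀ lam ≥ lam₀, ∀ μ ≥ lam,
      ‖(P lam) ∘L (P μ) - P lam‖ ≤ ε) :
    ∃ Q : StrongDual ℝ X →L[ℝ] StrongDual ℝ X,
      Q ∘L Q = Q ∧ Set.range Q = (Y : Set (StrongDual ℝ X)) ∧
      IsWeakStarContinuous Q ∧ ‖Q‖ ≤ M := by
  classical
  obtain ⟨lam₀⟩ := ‹Nonempty Λ›
  have hM0 : (0:ℝ) ≤ M := le_trans (norm_nonneg (P lam₀)) (hM lam₀)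
  choose S hS using fun lam => exists_predual (P lam) (hwcont lam)
  -- basic facts
  have hPmem : ∀ lam φ, P lam φ ∈ Yl lam := fun lam φ => by
    rw [← SetLike.mem_coe, ← hrange lam]; exact Set.mem_range_self φ
  have hfix : ∀ lam (y : StrongDual ℝ X), y ∈ Yl lam → P lam y = y := by
    intro lam y hy
    rw [← SetLike.mem_coe, ← hrange lam] at hy
    obtain ⟨z, rfl⟩ := hy
    exact DFunLike.congr_fun (hproj lam) z
  have hPP : ∀ {lam μ : Λ}, lam ≤ μ → ∀ φ, P μ (P lam φ) = P lam φ :=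
    fun {lam μ} h φ => hfix μ _ (hmono _ _ h (hPmem lam φ))
  have hSnorm : ∀ lam (x : X), ‖S lam x‖ ≤ M * ‖x‖ := by
    intro lam x
    refine NormedSpace.norm_le_dual_bound ℝ (S lam x) (by positivity) (fun φ => ?_)
    rw [← hS lam φ x]
    calc ‖P lam φ x‖ ≤ ‖P lam φ‖ * ‖x‖ := (P lam φ).le_opNorm x
    _ ≤ ‖P lam‖ * ‖φ‖ * ‖x‖ := by gcongr; exact (P lam).le_opNorm φ
    _ ≤ M * ‖φ‖ * ‖x‖ := by gcongr; exact hM lam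
    _ = M * ‖x‖ * ‖φ‖ := by ring
  have hSS : ∀ {lam μ : Λ}, lam ≤ μ → ∀ x : X, S lam (S μ x) = S lam x := by
    intro lam μ h x
    have hz : ∀ φ : StrongDual ℝ X, φ (S lam (S μ x) - S lam x) = 0 := by
      intro φ
      rw [map_sub, ← hS lam φ, ← hS μ (P lam φ), hPP h, hS lam φ, sub_self]
    have := NormedSpace.eq_zero_of_forall_dual_eq_zero ℝ hz
    rwa [sub_eq_zero] at this
  have hSSdist : ∀ {lam μ : Λ}, lam ≤ μ → ∀ x : X,
      ‖S μ (S lam x) - S lam x‖ ≤ ‖(P lam) ∘L (P μ) - P lam‖ * ‖x‖ := by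
    intro lam μ h x
    refine NormedSpace.norm_le_dual_bound ℝ _ (by positivity) (fun φ => ?_)
    have h1 : φ (S μ (S lam x) - S lam x) = ((P lam ∘L P μ - P lam) φ) x := by
      rw [map_sub, ← hS μ φ, ← hS lam (P μ φ) x, ← hS lam φ x]
      simp
    rw [h1]
    calc ‖((P lam ∘L P μ - P lam) φ) x‖ ≤ ‖(P lam ∘L P μ - P lam) φ‖ * ‖x‖ :=
      ((P lam ∘L P μ - P lam) φ).le_opNorm x
    _ ≤ ‖P lam ∘L P μ - P lam‖ * ‖φ‖ * ‖x‖ := by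
        gcongr; exact (P lam ∘L P μ - P lam).le_opNorm φ
    _ = ‖P lam ∘L P μ - P lam‖ * ‖x‖ * ‖φ‖ := by ring
  -- convergence on Y
  have hC : ∀ y : StrongDual ℝ X, y ∈ Y → Tendsto (fun lam => P lam y) atTop (𝓝 y) := by
    intro y hy
    rw [Metric.tendsto_nhds]
    intro ε hε
    have hy' := hdense hy
    rw [Metric.mem_closure_iff] at hy'
    obtain ⟨z, hz, hdist⟩ := hy' (ε/(M+2)) (by positivity)
    rw [Set.mem_iUnion] at hz
    obtain ⟨lam₁, hz1⟩ := hz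
    filter_upwards [eventually_ge_atTop lam₁] with lam hlam
    have hzfix : P lam z = z := hfix lam z (hmono _ _ hlam hz1)
    have heq : P lam y - y = P lam (y - z) - (y - z) := by
      rw [map_sub, hzfix]; abel
    rw [dist_eq_norm] at hdist ⊢
    rw [heq]
    have hyz : ‖y - z‖ < ε/(M+2) := hdist
    calc ‖P lam (y-z) - (y-z)‖ ≤ ‖P lam (y-z)‖ + ‖y-z‖ := norm_sub_le _ _
    _ ≤ ‖P lam‖ * ‖y-z‖ + ‖y-z‖ := by gcongr; exact (P lam).le_opNorm _
    _ ≤ M * ‖y-z‖ + ‖y-z‖ := by gcongr; exact hM lam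
    _ = (M+1) * ‖y-z‖ := by ring
    _ < ε := by
        have h2 : (M+1) * ‖y-z‖ < (M+1) * (ε/(M+2)) := by
          apply mul_lt_mul_of_pos_left hyz; linarith
        have h3 : (M+1) * (ε/(M+2)) < ε := by
          rw [mul_div_assoc']
          rw [div_lt_iff₀ (by linarith)]
          nlinarith
        linarith
  -- the set of x for which the net (S lam x) is Cauchy
  let G : Submodule ℝ X :=
    { carrier := {x | ∀ ε > (0:ℝ), ∃ lam₁, ∀ μ ≥ lam₁, ∀ ν ≥ lam₁, ‖S μ x - S ν x‖ ≤ ε}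
      add_mem' := by
        intro a b ha hb ε hε
        obtain ⟨la, hla⟩ := ha (ε/2) (by linarith)
        obtain ⟨lb, hlb⟩ := hb (ε/2) (by linarith)
        obtain ⟨lc, hca, hcb⟩ := exists_ge_ge la lb
        refine ⟨lc, fun μ hμ ν hν => ?_⟩
        have h1 := hla μ (le_trans hca hμ) ν (le_trans hca hν)
        have h2 := hlb μ (le_trans hcb hμ) ν (le_trans hcb hν)
        calc ‖S μ (a+b) - S ν (a+b)‖ = ‖(S μ a - S ν a) + (S μ b - S ν b)‖ := by
              rw [map_add, map_add]; congr 1; abel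
        _ ≤ ‖S μ a - S ν a‖ + ‖S μ b - S ν b‖ := norm_add_le _ _
        _ ≤ ε := by linarith
      zero_mem' := by
        intro ε hε
        exact ⟨lam₀, fun μ _ ν _ => by simp [le_of_lt hε]⟩
      smul_mem' := by
        intro c x hx ε hε
        obtain ⟨la, hla⟩ := hx (ε/(‖c‖+1)) (by positivity)
        refine ⟨la, fun μ hμ ν hν => ?_⟩
        have h1 := hla μ hμ ν hν
        calc ‖S μ (c • x) - S ν (c • x)‖ = ‖c‖ * ‖S μ x - S ν x‖ := by
              rw [map_smul, map_smul, ← smul_sub, norm_smul]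
        _ ≤ ‖c‖ * (ε/(‖c‖+1)) := by gcongr
        _ ≤ ε := by
            rw [mul_div_assoc']
            rw [div_le_iff₀ (by positivity)]
            nlinarith [norm_nonneg c, le_of_lt hε] }
  have hGclosed : IsClosed (G : Set X) := by
    refine isClosed_of_closure_subset (fun x hx => ?_)
    intro ε hε
    rw [Metric.mem_closure_iff] at hx
    obtain ⟨b, hbG, hxb⟩ := hx (ε/(4*(M+1))) (by positivity)
    obtain ⟨lam₁, h1⟩ := hbG (ε/2) (by linarith)
    refine ⟨lam₁, fun μ hμ ν hν => ?_⟩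
    have hd : ‖x - b‖ < ε/(4*(M+1)) := by rwa [dist_eq_norm] at hxb
    have hμb : ‖S μ x - S μ b‖ ≤ M * ‖x - b‖ := by
      rw [← map_sub]; exact hSnorm μ (x - b)
    have hνb : ‖S ν x - S ν b‖ ≤ M * ‖x - b‖ := by
      rw [← map_sub]; exact hSnorm ν (x - b)
    calc ‖S μ x - S ν x‖
        = ‖(S μ x - S μ b) + (S μ b - S ν b) + (S ν b - S ν x)‖ := by congr 1; abel
    _ ≤ ‖(S μ x - S μ b) + (S μ b - S ν b)‖ + ‖S ν b - S ν x‖ := norm_add_le _ _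
    _ ≤ ‖S μ x - S μ b‖ + ‖S μ b - S ν b‖ + ‖S ν b - S ν x‖ := by
        gcongr; exact norm_add_le _ _
    _ ≤ M * ‖x - b‖ + ε/2 + M * ‖x - b‖ := by
        gcongr
        · exact h1 μ hμ ν hν
        · rw [norm_sub_rev]; exact hνb
    _ ≤ ε := by
        have h4 : M * ‖x - b‖ ≤ M * (ε/(4*(M+1))) := mul_le_mul_of_nonneg_left hd.le hM0
        have hD : (4*(M+1))*(ε/(4*(M+1))) = ε := by field_simp
        have hD0 : (0:ℝ) ≤ ε/(4*(M+1)) := by positivity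
        nlinarith
  have hGapprox : ∀ ε : ℝ, 0 < ε → ε ≤ 1/4 → ∃ lamε : Λ, ∀ lam ≥ lamε, ∀ x : X,
      ∃ g ∈ G, ‖S lam x - g‖ ≤ 4 * ε * (M+1) * ‖x‖ := by
    intro ε hε hε4
    choose l hl using fun n : ℕ => hlim (ε/2^n) (by positivity)
    refine ⟨l 0, fun lam hlam x => ?_⟩
    choose ub hub1 hub2 using fun a b : Λ => exists_ge_ge a b
    let lamseq : ℕ → Λ := fun n => Nat.rec lam (fun n ih => ub ih (l (n+1))) n
    have hmono1 : ∀ n, lamseq n ≤ lamseq (n+1) := fun n => hub1 _ _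
    have hge : ∀ n, l n ≤ lamseq n := by
      intro n
      cases n with
      | zero => exact hlam
      | succ n => exact hub2 _ _
    let w : ℕ → X := fun n => Nat.rec x (fun n ih => S (lamseq n) ih) n
    have hw0 : w 0 = x := rfl
    have hwsucc : ∀ n, w (n+1) = S (lamseq n) (w n) := fun _ => rfl
    have hinc : ∀ n, ‖w (n+2) - w (n+1)‖ ≤ ε/2^n * ‖w n‖ := by
      intro n
      have h2 : ‖(P (lamseq n)) ∘L (P (lamseq (n+1))) - P (lamseq n)‖ ≤ ε/2^n :=
        hl n (lamseq n) (hge n) (lamseq (n+1)) (hmono1 n)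
      calc ‖w (n+2) - w (n+1)‖
          = ‖S (lamseq (n+1)) (S (lamseq n) (w n)) - S (lamseq n) (w n)‖ := rfl
      _ ≤ ‖(P (lamseq n)) ∘L (P (lamseq (n+1))) - P (lamseq n)‖ * ‖w n‖ :=
            hSSdist (hmono1 n) (w n)
      _ ≤ ε/2^n * ‖w n‖ := by gcongr
    -- uniform bound
    have hkey : ∀ n, ‖w n‖ ≤ 2*(M+1)*‖x‖ ∧
        ‖w (n+1)‖ ≤ (M + ∑ k ∈ Finset.range n, ε/2^k * (2*(M+1))) * ‖x‖ := by
      have hsum : ∀ n, (∑ k ∈ Finset.range n, ε/2^k * (2*(M+1))) ≤ M + 1 := by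
        intro n
        have h1 : (∑ k ∈ Finset.range n, ε/2^k * (2*(M+1)))
            = (2*(M+1)*ε) * ∑ k ∈ Finset.range n, (1/2:ℝ)^k := by
          rw [Finset.mul_sum]
          congr 1
          funext k
          rw [div_pow, one_pow]
          ring
        rw [h1]
        have h2 : (∑ k ∈ Finset.range n, (1/2:ℝ)^k) ≤ 2 := sum_geometric_two_le n
        have h3 : (0:ℝ) ≤ 2*(M+1)*ε := by positivity
        calc (2*(M+1)*ε) * ∑ k ∈ Finset.range n, (1/2:ℝ)^k ≤ (2*(M+1)*ε) * 2 :=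
              mul_le_mul_of_nonneg_left h2 h3
        _ ≤ M + 1 := by nlinarith
      intro n
      induction n with
      | zero =>
        constructor
        · rw [hw0]; nlinarith [norm_nonneg x]
        · have h1 : ‖w 1‖ ≤ M * ‖x‖ := hSnorm lam x
          simpa using h1
      | succ n ih =>
        obtain ⟨ih1, ih2⟩ := ih
        have hn1 : ‖w (n+1)‖ ≤ 2*(M+1)*‖x‖ := by
          calc ‖w (n+1)‖ ≤ (M + ∑ k ∈ Finset.range n, ε/2^k * (2*(M+1))) * ‖x‖ := ih2
          _ ≤ (M + (M+1)) * ‖x‖ := by gcongr; exact hsum n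
          _ ≤ 2*(M+1)*‖x‖ := by nlinarith [norm_nonneg x]
        refine ⟨hn1, ?_⟩
        calc ‖w (n+2)‖ ≤ ‖w (n+1)‖ + ‖w (n+2) - w (n+1)‖ := by
              have := norm_add_le (w (n+1)) (w (n+2) - w (n+1))
              simpa using this
        _ ≤ (M + ∑ k ∈ Finset.range n, ε/2^k * (2*(M+1))) * ‖x‖ + ε/2^n * ‖w n‖ := by
              gcongr
              exact hinc n
        _ ≤ (M + ∑ k ∈ Finset.range n, ε/2^k * (2*(M+1))) * ‖x‖
              + ε/2^n * (2*(M+1)*‖x‖) := by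
              gcongr
        _ = (M + ∑ k ∈ Finset.range (n+1), ε/2^k * (2*(M+1))) * ‖x‖ := by
              rw [Finset.sum_range_succ]
              ring
    -- the sequence u n = w (n+1) is Cauchy with geometric rate
    set C : ℝ := ε * 2 * (M+1) * ‖x‖ with hCdef
    have hC0 : 0 ≤ C := by positivity
    have hu : ∀ n, dist (w (n+1)) (w (n+2)) ≤ C * (1/2)^n := by
      intro n
      rw [dist_eq_norm, norm_sub_rev]
      calc ‖w (n+2) - w (n+1)‖ ≤ ε/2^n * ‖w n‖ := hinc n
      _ ≤ ε/2^n * (2*(M+1)*‖x‖) := by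
            gcongr
            exact (hkey n).1
      _ = C * (1/2)^n := by
            rw [hCdef, div_pow, one_pow]
            ring
    have hcauchy : CauchySeq (fun n => w (n+1)) :=
      cauchySeq_of_le_geometric (1/2) C (by norm_num) hu
    obtain ⟨g, hg⟩ := cauchySeq_tendsto_of_complete hcauchy
    have hdist0 : dist (w 1) g ≤ C / (1 - 1/2) :=
      dist_le_of_le_geometric_of_tendsto₀ (1/2) C (by norm_num) hu hg
    have hgmem : g ∈ G := by
      intro ε' hε'
      have htend : Tendsto (fun n : ℕ => 2*M*(dist (w (n+1)) g)
          + 2*(ε/2^n)*(2*(M+1)*‖x‖)) atTop (𝓝 0) := by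
        have t1 : Tendsto (fun n : ℕ => dist (w (n+1)) g) atTop (𝓝 0) := by
          have := hg.dist (tendsto_const_nhds (x := g))
          simpa using this
        have t2 : Tendsto (fun n : ℕ => (ε/2^n)) atTop (𝓝 0) := by
          have h2 : Tendsto (fun n : ℕ => ((1:ℝ)/2)^n) atTop (𝓝 0) :=
            tendsto_pow_atTop_nhds_zero_of_lt_one (by norm_num) (by norm_num)
          have : (fun n : ℕ => (ε/2^n)) = fun n : ℕ => ε * ((1:ℝ)/2)^n := by
            funext n
            rw [div_pow, one_pow]
            ring
          rw [this]
          simpa using h2.const_mul ε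
        have := ((t1.const_mul (2*M)).add ((t2.const_mul 2).mul_const (2*(M+1)*‖x‖)))
        simpa using this
      have hev : ∀ᶠ n : ℕ in atTop, 2*M*(dist (w (n+1)) g)
          + 2*(ε/2^n)*(2*(M+1)*‖x‖) < ε' := htend.eventually_lt_const hε'
      obtain ⟨n, hn⟩ := hev.exists
      refine ⟨lamseq n, fun μ hμ ν hν => ?_⟩
      have hgw : ∀ κ : Λ, ‖S κ g - S κ (w (n+1))‖ ≤ M * dist (w (n+1)) g := by
        intro κ
        rw [← map_sub]
        calc ‖S κ (g - w (n+1))‖ ≤ M * ‖g - w (n+1)‖ := hSnorm κ _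
        _ = M * dist (w (n+1)) g := by rw [dist_eq_norm, norm_sub_rev]
      have hfixw : ∀ κ : Λ, lamseq n ≤ κ → ‖S κ (w (n+1)) - w (n+1)‖ ≤ ε/2^n * ‖w n‖ := by
        intro κ hκ
        rw [hwsucc n]
        calc ‖S κ (S (lamseq n) (w n)) - S (lamseq n) (w n)‖
            ≤ ‖(P (lamseq n)) ∘L (P κ) - P (lamseq n)‖ * ‖w n‖ := hSSdist hκ (w n)
        _ ≤ ε/2^n * ‖w n‖ := by
            gcongr
            exact hl n (lamseq n) (hge n) κ hκ
      have hwn : ‖w n‖ ≤ 2*(M+1)*‖x‖ := (hkey n).1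
      have hA : ‖S μ g - S μ (w (n+1))‖ ≤ M * dist (w (n+1)) g := hgw μ
      have hB : ‖S μ (w (n+1)) - w (n+1)‖ ≤ ε/2^n * ‖w n‖ := hfixw μ hμ
      have hCc : ‖w (n+1) - S ν (w (n+1))‖ ≤ ε/2^n * ‖w n‖ := by
        rw [norm_sub_rev]; exact hfixw ν hν
      have hD : ‖S ν (w (n+1)) - S ν g‖ ≤ M * dist (w (n+1)) g := by
        rw [norm_sub_rev]; exact hgw ν
      have expand : S μ g - S ν g = (S μ g - S μ (w (n+1))) + (S μ (w (n+1)) - w (n+1))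
          + (w (n+1) - S ν (w (n+1))) + (S ν (w (n+1)) - S ν g) := by abel
      calc ‖S μ g - S ν g‖
          ≤ ‖S μ g - S μ (w (n+1))‖ + ‖S μ (w (n+1)) - w (n+1)‖
            + ‖w (n+1) - S ν (w (n+1))‖ + ‖S ν (w (n+1)) - S ν g‖ := by
            rw [expand]
            exact le_trans (norm_add_le _ _) (by
              gcongr
              exact le_trans (norm_add_le _ _) (by gcongr; exact norm_add_le _ _))
      _ ≤ M * dist (w (n+1)) g + ε/2^n * ‖w n‖ + ε/2^n * ‖w n‖ + M * dist (w (n+1)) g :=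
            add_le_add (add_le_add (add_le_add hA hB) hCc) hD
      _ ≤ 2*M*(dist (w (n+1)) g) + 2*(ε/2^n)*(2*(M+1)*‖x‖) := by
            have h5 : ε/2^n * ‖w n‖ ≤ ε/2^n * (2*(M+1)*‖x‖) := by gcongr
            linarith
      _ ≤ ε' := hn.le
    refine ⟨g, hgmem, ?_⟩
    have hw1 : w 1 = S lam x := rfl
    have h2C : C / (1 - 1/2) = 2 * C := by
      rw [show (1:ℝ) - 1/2 = 1/2 by norm_num]
      rw [div_eq_iff (by norm_num : (1/2:ℝ) ≠ 0)]
      ring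
    calc ‖S lam x - g‖ = dist (w 1) g := by rw [dist_eq_norm, hw1]
    _ ≤ C / (1 - 1/2) := hdist0
    _ = 2 * C := h2C
    _ ≤ 4 * ε * (M+1) * ‖x‖ := by rw [hCdef]; nlinarith [norm_nonneg x]
  have hGtop : ∀ x : X, x ∈ G := by
    by_contra hcon
    push_neg at hcon
    obtain ⟨x₀, hx₀⟩ := hcon
    have hGconv : Convex ℝ (G : Set X) := G.convex
    obtain ⟨f, u, hfu, hGf⟩ := geometric_hahn_banach_point_closed hGconv hGclosed hx₀
    have hu0 : u < 0 := by
      have := hGf 0 G.zero_mem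
      simpa using this
    have hfzero : ∀ gg, gg ∈ G → f gg = 0 := by
      intro gg hgg
      by_contra hne
      have hmem : ((u-1)/(f gg)) • gg ∈ G := G.smul_mem _ hgg
      have h1 := hGf _ hmem
      rw [map_smul, smul_eq_mul, div_mul_cancel₀ _ hne] at h1
      linarith
    have hfY : (f : StrongDual ℝ X) ∈ Y := by
      refine mem_of_vanishing_preann Y hYc f (fun z hz => ?_)
      have hSz : ∀ lam, S lam z = 0 := by
        intro lam
        refine NormedSpace.eq_zero_of_forall_dual_eq_zero ℝ (fun φ => ?_)
        rw [← hS lam φ z]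
        exact hz (P lam φ) (hYlY lam (hPmem lam φ))
      have hzG : z ∈ G := by
        intro ε hε
        exact ⟨lam₀, fun μ _ ν _ => by rw [hSz μ, hSz ν, sub_zero, norm_zero]; linarith⟩
      exact hfzero z hzG
    have hsmall : ∀ ε : ℝ, 0 < ε → ε ≤ 1/4 → ‖f‖ ≤ 4*ε*(M+1)*‖f‖ := by
      intro ε hε hε4
      obtain ⟨lamε, hap⟩ := hGapprox ε hε hε4
      have hPfb : ∀ lam ≥ lamε, ‖P lam f‖ ≤ 4*ε*(M+1)*‖f‖ := by
        intro lam hlam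
        refine ContinuousLinearMap.opNorm_le_bound _ (by positivity) (fun z => ?_)
        obtain ⟨g, hgG, hgap⟩ := hap lam hlam z
        have heval : P lam f z = f (S lam z) := hS lam f z
        rw [heval]
        have hfg : f g = 0 := hfzero g hgG
        calc ‖f (S lam z)‖ = ‖f (S lam z - g)‖ := by rw [map_sub, hfg, sub_zero]
        _ ≤ ‖f‖ * ‖S lam z - g‖ := f.le_opNorm _
        _ ≤ ‖f‖ * (4*ε*(M+1)*‖z‖) := by gcongr
        _ = 4*ε*(M+1)*‖f‖*‖z‖ := by ring
      have hconvf := (hC f hfY).norm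
      exact le_of_tendsto hconvf ((eventually_ge_atTop lamε).mono hPfb)
    have hfzero' : f = 0 := by
      by_contra hne
      have hpos : 0 < ‖f‖ := norm_pos_iff.mpr hne
      have hε : (0:ℝ) < min (1/4) (1/(8*(M+1))) := by positivity
      have h1 := hsmall _ hε (min_le_left _ _)
      have h2 : min (1/4) (1/(8*(M+1))) ≤ 1/(8*(M+1)) := min_le_right _ _
      have h3 : 4*(min (1/4) (1/(8*(M+1))))*(M+1) ≤ 1/2 := by
        have h4 : (0:ℝ) < M+1 := by linarith
        have h5 : (M+1) ≠ 0 := ne_of_gt h4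
        calc 4*(min (1/4) (1/(8*(M+1))))*(M+1) ≤ 4*(1/(8*(M+1)))*(M+1) := by
              gcongr
        _ = 1/2 := by field_simp; ring
      nlinarith
    rw [hfzero'] at hfu
    simp at hfu
    linarith
  -- construct T
  have hTex : ∀ x : X, ∃ y : X, Tendsto (fun lam => S lam x) atTop (𝓝 y) := by
    intro x
    have hcauchy : Cauchy (Filter.map (fun lam => S lam x) atTop) := by
      rw [Metric.cauchy_iff]
      refine ⟨Filter.NeBot.map atTop_neBot _, ?_⟩
      intro ε hε
      obtain ⟨lam₁, h1⟩ := hGtop x (ε/2) (by linarith)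
      refine ⟨(fun lam => S lam x) '' Set.Ici lam₁, Filter.image_mem_map (Ici_mem_atTop lam₁), ?_⟩
      rintro a ⟨μ, hμ, rfl⟩ b ⟨ν, hν, rfl⟩
      rw [dist_eq_norm]
      exact lt_of_le_of_lt (h1 μ hμ ν hν) (by linarith)
    obtain ⟨y, hy⟩ := CompleteSpace.complete hcauchy
    exact ⟨y, hy⟩
  choose T₀ hT₀ using hTex
  have hT₀norm : ∀ x, ‖T₀ x‖ ≤ M * ‖x‖ := fun x =>
    le_of_tendsto ((hT₀ x).norm) (Eventually.of_forall (fun lam => hSnorm lam x))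
  have hT₀add : ∀ a b : X, T₀ (a + b) = T₀ a + T₀ b := by
    intro a b
    refine tendsto_nhds_unique ?_ ((hT₀ a).add (hT₀ b))
    have : (fun lam => S lam (a+b)) = fun lam => S lam a + S lam b := by
      funext lam; rw [map_add]
    rw [← this]; exact hT₀ (a+b)
  have hT₀smul : ∀ (c : ℝ) (x : X), T₀ (c • x) = c • T₀ x := by
    intro c x
    refine tendsto_nhds_unique ?_ ((hT₀ x).const_smul c)
    have : (fun lam => S lam (c • x)) = fun lam => c • S lam x := by
      funext lam; rw [map_smul]
    rw [← this]; exact hT₀ (c • x)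
  let T : X →L[ℝ] X := LinearMap.mkContinuous ⟨⟨T₀, hT₀add⟩, hT₀smul⟩ M hT₀norm
  have hTapp : ∀ x, T x = T₀ x := fun x => rfl
  have hTnorm : ‖T‖ ≤ M := LinearMap.mkContinuous_norm_le _ hM0 _
  -- key identities
  have hST : ∀ lam (x : X), S lam (T₀ x) = S lam x := by
    intro lam x
    refine tendsto_nhds_unique (((S lam).continuous.tendsto _).comp (hT₀ x)) ?_
    refine Tendsto.congr' ?_ (tendsto_const_nhds (x := S lam x))
    filter_upwards [eventually_ge_atTop lam] with μ hμ
    exact (hSS hμ x).symm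
  have hTT : ∀ x, T₀ (T₀ x) = T₀ x := by
    intro x
    refine tendsto_nhds_unique ?_ (hT₀ x)
    have := hT₀ (T₀ x)
    simpa only [hST] using this
  -- construct Q
  let Q : StrongDual ℝ X →L[ℝ] StrongDual ℝ X := LinearMap.mkContinuous
    { toFun := fun φ => φ.comp T
      map_add' := by intro a b; ext x; simp
      map_smul' := by intro c a; ext x; simp }
    M (fun φ => by
      calc ‖φ.comp T‖ ≤ ‖φ‖ * ‖T‖ := φ.opNorm_comp_le T
      _ ≤ ‖φ‖ * M := by gcongr
      _ = M * ‖φ‖ := by ring)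
  have hQapp : ∀ (φ : StrongDual ℝ X) (x : X), Q φ x = φ (T₀ x) := fun φ x => rfl
  have hQnorm : ‖Q‖ ≤ M := LinearMap.mkContinuous_norm_le _ hM0 _
  have hQproj : Q ∘L Q = Q := by
    ext φ x
    show Q (Q φ) x = Q φ x
    rw [hQapp, hQapp, hQapp]
    show φ (T₀ (T₀ x)) = φ (T₀ x)
    rw [hTT]
  have hQws : IsWeakStarContinuous Q := by
    apply WeakDual.continuous_of_continuous_eval
    intro x
    exact WeakDual.eval_continuous (T₀ x)
  have hQmemY : ∀ φ : StrongDual ℝ X, Q φ ∈ Y := by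
    intro φ
    have htend : Tendsto (fun lam => (StrongDual.toWeakDual (P lam φ))) atTop
        (𝓝 (StrongDual.toWeakDual (Q φ))) := by
      rw [tendsto_iff_forall_eval_tendsto_topDualPairing]
      intro z
      have h1 : Tendsto (fun lam => φ (S lam z)) atTop (𝓝 (φ (T₀ z))) :=
        (φ.continuous.tendsto (T₀ z)).comp (hT₀ z)
      exact h1.congr (fun lam => (hS lam φ z).symm)
    exact hYc.mem_of_tendsto htend (Eventually.of_forall (fun lam => hYlY lam (hPmem lam φ)))
  have hfixQ : ∀ y : StrongDual ℝ X, y ∈ Y → Q y = y := by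
    intro y hy
    ext x
    have h1 : Tendsto (fun lam => (P lam y) x) atTop (𝓝 (y (T₀ x))) := by
      have := (y.continuous.tendsto (T₀ x)).comp (hT₀ x)
      exact this.congr (fun lam => (hS lam y x).symm)
    have h2 : Tendsto (fun lam => (P lam y) x) atTop (𝓝 (y x)) := by
      have hev := ((NormedSpace.inclusionInDoubleDual ℝ X x).continuous.tendsto y).comp (hC y hy)
      exact hev
    have := tendsto_nhds_unique h1 h2
    show Q y x = y x
    rw [hQapp]
    exact this
  have hQrange : Set.range Q = (Y : Set (StrongDual ℝ X)) := by
    ext ψ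
    constructor
    · rintro ⟨φ, rfl⟩; exact hQmemY φ
    · intro hψ; exact ⟨ψ, hfixQ ψ hψ⟩
  exact ⟨Q, hQproj, hQrange, hQws, hQnorm⟩
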